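/- Fix real numbers β₁, β₂ and define the free-energy functional Ψ(g) = -I(g) + β₁·e(g) + β₂·t(g) on graphons. If a graphon g* is a maximizer of Ψ, i.e. Ψ(g') ≤ Ψ(g*) for every graphon g', then t(g*) ≤ e(g*)³. -/

import Mathlib

open MeasureTheory Set

/-- `I₀(u) = (1/2)[u ln u + (1-u) ln(1-u)]`; since `Real.log 0 = 0`,
this automatically satisfies the continuous extension `I₀(0) = I₀(1) = 0`. -/
noncomputable def I0 (u : ℝ) : ℝ :=
  (1/2) * (u * Real.log u + (1 - u) * Real.log (1 - u))

/-- A graphon: a measurable function `[0,1]² → [0,1]`, symmetric on `[0,1]²`. -/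
def IsGraphon (g : ℝ → ℝ → ℝ) : Prop :=
  Measurable (Function.uncurry g) ∧
  (∀ x ∈ Icc (0:ℝ) 1, ∀ y ∈ Icc (0:ℝ) 1, g x y = g y x) ∧
  (∀ x ∈ Icc (0:ℝ) 1, ∀ y ∈ Icc (0:ℝ) 1, g x y ∈ Icc (0:ℝ) 1)

/-- Edge density `e(g) = ∫∫ g`. -/
noncomputable def edgeDensity (g : ℝ → ℝ → ℝ) : ℝ :=
  ∫ x in Icc (0:ℝ) 1, ∫ y in Icc (0:ℝ) 1, g x y

/-- Triangle density `t(g) = ∫∫∫ g(x,y) g(y,z) g(z,x)`. -/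
noncomputable def triangleDensity (g : ℝ → ℝ → ℝ) : ℝ :=
  ∫ x in Icc (0:ℝ) 1, ∫ y in Icc (0:ℝ) 1, ∫ z in Icc (0:ℝ) 1,
    g x y * g y z * g z x

/-- Rate function `I(g) = ∫∫ I₀(g(x,y))`. -/
noncomputable def rateFn (g : ℝ → ℝ → ℝ) : ℝ :=
  ∫ x in Icc (0:ℝ) 1, ∫ y in Icc (0:ℝ) 1, I0 (g x y)

/-! ### Auxiliary material -/

local notation "μ01" => MeasureTheory.volume.restrict (Set.Icc (0:ℝ) 1)

instance : IsProbabilityMeasure μ01 :=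
  ⟨by rw [Measure.restrict_apply_univ, Real.volume_Icc]; norm_num⟩

lemma aemem01 : ∀ᵐ x ∂μ01, x ∈ Icc (0:ℝ) 1 := ae_restrict_mem measurableSet_Icc

lemma intg_of_bdd {f : ℝ → ℝ} (hmf : AEStronglyMeasurable f μ01) {C : ℝ}
    (hb : ∀ x ∈ Icc (0:ℝ) 1, |f x| ≤ C) : Integrable f μ01 := by
  refine ⟨hmf, HasFiniteIntegral.of_bounded (C := C) ?_⟩
  filter_upwards [aemem01] with x hx using by simpa using hb x hx

lemma abs_int_le {f : ℝ → ℝ} {C : ℝ} (hb : ∀ x ∈ Icc (0:ℝ) 1, |f x| ≤ C) :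
    |∫ x, f x ∂μ01| ≤ C := by
  have h := norm_integral_le_of_norm_le_const (μ := μ01) (f := f) (C := C)
    (by filter_upwards [aemem01] with x hx using by simpa using hb x hx)
  simpa [measure_univ] using h

lemma amgm {a b c : ℝ} (ha : 0 ≤ a) (hb : 0 ≤ b) (hc : 0 ≤ c) :
    a * b * c ≤ (a^3 + b^3 + c^3)/3 := by
  nlinarith [mul_nonneg (add_nonneg (add_nonneg ha hb) hc)
    (by positivity : (0:ℝ) ≤ (a-b)^2 + (b-c)^2 + (c-a)^2)]

lemma amgm_eq {a b c : ℝ} (ha : 0 ≤ a) (hb : 0 ≤ b) (hc : 0 ≤ c)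
    (h : (a^3 + b^3 + c^3)/3 - a * b * c = 0) : a = b := by
  have key : (a+b+c) * ((a-b)^2 + (b-c)^2 + (c-a)^2)
      = 6 * ((a^3 + b^3 + c^3)/3 - a * b * c) := by ring
  rw [h, mul_zero] at key
  rcases mul_eq_zero.mp key with h1 | h2
  · have ha0 : a = 0 := by linarith
    have hb0 : b = 0 := by linarith
    rw [ha0, hb0]
  · have s1 := sq_nonneg (a-b); have s2 := sq_nonneg (b-c); have s3 := sq_nonneg (c-a)
    have hab : (a-b)^2 = 0 := by linarith
    have := pow_eq_zero_iff (n := 2) (by norm_num) |>.mp hab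
    linarith

lemma I0_continuous : Continuous I0 := by
  unfold I0
  exact continuous_const.mul (Real.continuous_mul_log.add
    (Real.continuous_mul_log.comp (continuous_const.sub continuous_id)))

lemma mul_log_bounds {u : ℝ} (h0 : 0 ≤ u) (h1 : u ≤ 1) :
    -1 ≤ u * Real.log u ∧ u * Real.log u ≤ 0 := by
  rcases eq_or_lt_of_le h0 with h | h
  · simp [← h]
  constructor
  · have hl : Real.log (1/u) ≤ 1/u - 1 := Real.log_le_sub_one_of_pos (by positivity)
    rw [Real.log_div one_ne_zero (ne_of_gt h), Real.log_one] at hl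
    have h2 : u * (0 - Real.log u) ≤ u * (1/u - 1) :=
      mul_le_mul_of_nonneg_left (by linarith) h0
    have hu : u * (1/u) = 1 := by field_simp
    nlinarith
  · exact mul_nonpos_of_nonneg_of_nonpos h0 (Real.log_nonpos h0 h1)

lemma I0_abs_le {u : ℝ} (hu : u ∈ Icc (0:ℝ) 1) : |I0 u| ≤ 1 := by
  obtain ⟨h0, h1⟩ := hu
  have b1 := mul_log_bounds h0 h1
  have b2 := mul_log_bounds (by linarith : (0:ℝ) ≤ 1 - u) (by linarith)
  rw [I0, abs_le]; constructor <;> nlinarith [b1.1, b1.2, b2.1, b2.2]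

lemma I0_strictConvexOn : StrictConvexOn ℝ (Icc (0:ℝ) 1) I0 := by
  have h1 : StrictConvexOn ℝ (Icc (0:ℝ) 1) (fun u : ℝ => u * Real.log u) :=
    Real.strictConvexOn_mul_log.subset Icc_subset_Ici_self (convex_Icc 0 1)
  have h2 : ConvexOn ℝ (Icc (0:ℝ) 1) (fun u : ℝ => (1-u) * Real.log (1-u)) := by
    have h := Real.convexOn_mul_log.comp_affineMap (AffineMap.lineMap (1:ℝ) (0:ℝ))
    have hsub : Icc (0:ℝ) 1 ⊆ (AffineMap.lineMap (1:ℝ) (0:ℝ)) ⁻¹' (Ici 0) := by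
      intro u hu; simp [AffineMap.lineMap_apply]; linarith [hu.2]
    have h' := h.subset hsub (convex_Icc 0 1)
    have heq : (fun u : ℝ => (1-u) * Real.log (1-u))
        = (fun x : ℝ => x * Real.log x) ∘ (AffineMap.lineMap (1:ℝ) (0:ℝ)) := by
      ext u; simp [Function.comp, AffineMap.lineMap_apply]; ring_nf
    rw [heq]; exact h'
  have hsum := h1.add_convexOn h2
  refine ⟨convex_Icc 0 1, fun x hx y hy hxy a b ha hb hab => ?_⟩
  have key := hsum.2 hx hy hxy ha hb hab
  simp only [Pi.add_apply, smul_eq_mul] at key ⊢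
  unfold I0
  nlinarith [key]

lemma I0_convexOn : ConvexOn ℝ (Icc (0:ℝ) 1) I0 := I0_strictConvexOn.convexOn

section GraphonHelpers

variable {g : ℝ → ℝ → ℝ}

lemma slice_meas (hm : Measurable (Function.uncurry g)) (x : ℝ) : Measurable (g x) :=
  hm.comp measurable_prodMk_left

lemma slice_meas' (hm : Measurable (Function.uncurry g)) (x : ℝ) :
    Measurable fun z => g z x :=
  hm.comp (measurable_id.prodMk measurable_const)

lemma dbl_meas (hm : Measurable (Function.uncurry g)) :
    StronglyMeasurable (fun x => ∫ y, g x y ∂μ01) :=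
  hm.stronglyMeasurable.integral_prod_right'

end GraphonHelpers


lemma intconst01 (c : ℝ) : (∫ _x, c ∂μ01) = c := by simp

lemma isGraphon_const {c : ℝ} (hc : c ∈ Icc (0:ℝ) 1) : IsGraphon (fun _ _ => c) :=
  ⟨measurable_const, fun _ _ _ _ => rfl, fun _ _ _ _ => hc⟩

lemma edge_const (c : ℝ) : edgeDensity (fun _ _ => c) = c := by
  unfold edgeDensity
  rw [show (∫ x in Icc (0:ℝ) 1, ∫ _y in Icc (0:ℝ) 1, c) = ∫ _x in Icc (0:ℝ) 1, c from
    integral_congr_ae (Filter.Eventually.of_forall fun x => intconst01 c), intconst01]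

lemma tri_const (c : ℝ) : triangleDensity (fun _ _ => c) = c^3 := by
  unfold triangleDensity
  have h1 : ∀ x y : ℝ, (∫ _z in Icc (0:ℝ) 1, c * c * c) = c^3 := by
    intro x y; rw [intconst01]; ring
  calc (∫ _x in Icc (0:ℝ) 1, ∫ _y in Icc (0:ℝ) 1, ∫ _z in Icc (0:ℝ) 1, c * c * c)
      = ∫ _x in Icc (0:ℝ) 1, ∫ _y in Icc (0:ℝ) 1, (c^3 : ℝ) := by
        refine integral_congr_ae (Filter.Eventually.of_forall fun x => ?_)
        exact integral_congr_ae (Filter.Eventually.of_forall fun y => h1 x y)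
    _ = ∫ _x in Icc (0:ℝ) 1, (c^3 : ℝ) :=
        integral_congr_ae (Filter.Eventually.of_forall fun x => intconst01 _)
    _ = c^3 := intconst01 _

lemma rate_const (c : ℝ) : rateFn (fun _ _ => c) = I0 c := by
  unfold rateFn
  rw [show (∫ x in Icc (0:ℝ) 1, ∫ _y in Icc (0:ℝ) 1, I0 c) = ∫ _x in Icc (0:ℝ) 1, I0 c from
    integral_congr_ae (Filter.Eventually.of_forall fun x => intconst01 _), intconst01]

section AEConst

variable {g : ℝ → ℝ → ℝ} {c : ℝ}

lemma edge_aeconst (h : ∀ᵐ x ∂μ01, ∀ᵐ y ∂μ01, g x y = c) : edgeDensity g = c := by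
  unfold edgeDensity
  have h1 : (fun x => ∫ y in Icc (0:ℝ) 1, g x y) =ᵐ[μ01] fun _ => c := by
    filter_upwards [h] with x hx
    rw [integral_congr_ae (by filter_upwards [hx] with y hy using hy), intconst01]
  rw [integral_congr_ae h1, intconst01]

lemma tri_aeconst (hsym : ∀ x ∈ Icc (0:ℝ) 1, ∀ y ∈ Icc (0:ℝ) 1, g x y = g y x)
    (h : ∀ᵐ x ∂μ01, ∀ᵐ y ∂μ01, g x y = c) : triangleDensity g = c^3 := by
  unfold triangleDensity
  have h1 : (fun x => ∫ y in Icc (0:ℝ) 1, ∫ z in Icc (0:ℝ) 1, g x y * g y z * g z x)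
      =ᵐ[μ01] fun _ => c^3 := by
    filter_upwards [h, aemem01] with x hx hxI
    have h2 : (fun y => ∫ z in Icc (0:ℝ) 1, g x y * g y z * g z x) =ᵐ[μ01] fun _ => c^3 := by
      filter_upwards [hx, h, aemem01] with y hxy hy hyI
      have h3 : (fun z => g x y * g y z * g z x) =ᵐ[μ01] fun _ => c^3 := by
        filter_upwards [hy, hx, aemem01] with z hyz hxz hzI
        rw [hxy, hyz, hsym z hzI x hxI, hxz]; ring
      rw [integral_congr_ae h3, intconst01]
    rw [integral_congr_ae h2, intconst01]
  rw [integral_congr_ae h1, intconst01]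

end AEConst


section GBounds

variable {g : ℝ → ℝ → ℝ}

lemma g_abs (hbd : ∀ x ∈ Icc (0:ℝ) 1, ∀ y ∈ Icc (0:ℝ) 1, g x y ∈ Icc (0:ℝ) 1) :
    ∀ x ∈ Icc (0:ℝ) 1, ∀ y ∈ Icc (0:ℝ) 1, |g x y| ≤ 1 := fun x hx y hy =>
  abs_le.2 ⟨by linarith [(hbd x hx y hy).1], (hbd x hx y hy).2⟩

lemma comp_slice_int (hm : Measurable (Function.uncurry g))
    (hbd : ∀ x ∈ Icc (0:ℝ) 1, ∀ y ∈ Icc (0:ℝ) 1, g x y ∈ Icc (0:ℝ) 1)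
    {φ : ℝ → ℝ} (hφ : Measurable φ) {C : ℝ} (hC : ∀ u ∈ Icc (0:ℝ) 1, |φ u| ≤ C)
    {x : ℝ} (hx : x ∈ Icc (0:ℝ) 1) : Integrable (fun y => φ (g x y)) μ01 :=
  intg_of_bdd ((hφ.comp (slice_meas hm x)).aestronglyMeasurable)
    (fun y hy => hC _ (hbd x hx y hy))

lemma comp_dbl_int (hm : Measurable (Function.uncurry g))
    (hbd : ∀ x ∈ Icc (0:ℝ) 1, ∀ y ∈ Icc (0:ℝ) 1, g x y ∈ Icc (0:ℝ) 1)
    {φ : ℝ → ℝ} (hφ : Measurable φ) {C : ℝ} (hC : ∀ u ∈ Icc (0:ℝ) 1, |φ u| ≤ C) :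
    Integrable (fun x => ∫ y, φ (g x y) ∂μ01) μ01 := by
  have hmeas : StronglyMeasurable (fun x => ∫ y, φ (g x y) ∂μ01) :=
    (hφ.comp hm).stronglyMeasurable.integral_prod_right'
  exact intg_of_bdd hmeas.aestronglyMeasurable
    (fun x hx => abs_int_le (fun y hy => hC _ (hbd x hx y hy)))

lemma slice_int (hm : Measurable (Function.uncurry g))
    (hbd : ∀ x ∈ Icc (0:ℝ) 1, ∀ y ∈ Icc (0:ℝ) 1, g x y ∈ Icc (0:ℝ) 1)
    {x : ℝ} (hx : x ∈ Icc (0:ℝ) 1) : Integrable (fun y => g x y) μ01 :=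
  comp_slice_int hm hbd measurable_id (fun u hu => by
    simp only [id_eq]; exact abs_le.2 ⟨by linarith [hu.1], hu.2⟩) hx

lemma d_mem (hm : Measurable (Function.uncurry g))
    (hbd : ∀ x ∈ Icc (0:ℝ) 1, ∀ y ∈ Icc (0:ℝ) 1, g x y ∈ Icc (0:ℝ) 1)
    {x : ℝ} (hx : x ∈ Icc (0:ℝ) 1) : (∫ y, g x y ∂μ01) ∈ Icc (0:ℝ) 1 := by
  constructor
  · exact integral_nonneg_of_ae (by filter_upwards [aemem01] with y hy
      using (hbd x hx y hy).1)
  · exact (abs_le.1 (abs_int_le (fun y hy => g_abs hbd x hx y hy))).2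

lemma d_int (hm : Measurable (Function.uncurry g))
    (hbd : ∀ x ∈ Icc (0:ℝ) 1, ∀ y ∈ Icc (0:ℝ) 1, g x y ∈ Icc (0:ℝ) 1) :
    Integrable (fun x => ∫ y, g x y ∂μ01) μ01 :=
  intg_of_bdd (dbl_meas hm).aestronglyMeasurable
    (fun x hx => abs_int_le (fun y hy => g_abs hbd x hx y hy))

lemma edge_mem (hm : Measurable (Function.uncurry g))
    (hbd : ∀ x ∈ Icc (0:ℝ) 1, ∀ y ∈ Icc (0:ℝ) 1, g x y ∈ Icc (0:ℝ) 1) :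
    edgeDensity g ∈ Icc (0:ℝ) 1 := by
  have h : edgeDensity g = ∫ x, (∫ y, g x y ∂μ01) ∂μ01 := rfl
  rw [h]
  constructor
  · exact integral_nonneg_of_ae (by filter_upwards [aemem01] with x hx
      using (d_mem hm hbd hx).1)
  · exact (abs_le.1 (abs_int_le (fun x hx =>
      abs_le.2 ⟨by linarith [(d_mem hm hbd hx).1], (d_mem hm hbd hx).2⟩))).2

lemma jensen_I0 (hm : Measurable (Function.uncurry g))
    (hbd : ∀ x ∈ Icc (0:ℝ) 1, ∀ y ∈ Icc (0:ℝ) 1, g x y ∈ Icc (0:ℝ) 1) :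
    I0 (edgeDensity g) ≤ rateFn g := by
  have hI0m : Measurable I0 := I0_continuous.measurable
  have hi_int : ∀ x ∈ Icc (0:ℝ) 1, Integrable (fun y => I0 (g x y)) μ01 :=
    fun x hx => comp_slice_int hm hbd hI0m (fun u hu => I0_abs_le hu) hx
  have step1 : ∀ x ∈ Icc (0:ℝ) 1,
      I0 (∫ y, g x y ∂μ01) ≤ ∫ y, I0 (g x y) ∂μ01 := by
    intro x hx
    exact I0_convexOn.map_integral_le (I0_continuous.continuousOn) isClosed_Icc
      (by filter_upwards [aemem01] with y hy using hbd x hx y hy)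
      (slice_int hm hbd hx) (hi_int x hx)
  have step2 : I0 (∫ x, (∫ y, g x y ∂μ01) ∂μ01) ≤ ∫ x, I0 (∫ y, g x y ∂μ01) ∂μ01 := by
    exact I0_convexOn.map_integral_le (I0_continuous.continuousOn) isClosed_Icc
      (by filter_upwards [aemem01] with x hx using d_mem hm hbd hx)
      (d_int hm hbd)
      (intg_of_bdd ((hI0m.comp (dbl_meas hm).measurable).aestronglyMeasurable)
        (fun x hx => I0_abs_le (d_mem hm hbd hx)))
  have step3 : (∫ x, I0 (∫ y, g x y ∂μ01) ∂μ01) ≤ ∫ x, (∫ y, I0 (g x y) ∂μ01) ∂μ01 := by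
    refine integral_mono_ae
      (intg_of_bdd ((hI0m.comp (dbl_meas hm).measurable).aestronglyMeasurable)
        (fun x hx => I0_abs_le (d_mem hm hbd hx)))
      (comp_dbl_int hm hbd hI0m (fun u hu => I0_abs_le hu)) ?_
    filter_upwards [aemem01] with x hx using step1 x hx
  exact le_trans step2 step3

lemma dbl_comp_le (hm : Measurable (Function.uncurry g))
    (hbd : ∀ x ∈ Icc (0:ℝ) 1, ∀ y ∈ Icc (0:ℝ) 1, g x y ∈ Icc (0:ℝ) 1)
    {φ : ℝ → ℝ} (hφ : Measurable φ) {C M : ℝ} (hC : ∀ u ∈ Icc (0:ℝ) 1, |φ u| ≤ C)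
    (hM : ∀ u ∈ Icc (0:ℝ) 1, φ u ≤ M) :
    (∫ x, (∫ y, φ (g x y) ∂μ01) ∂μ01) ≤ M := by
  have inner_le : ∀ x ∈ Icc (0:ℝ) 1, (∫ y, φ (g x y) ∂μ01) ≤ M := by
    intro x hx
    have := integral_mono_ae (comp_slice_int hm hbd hφ hC hx) (integrable_const M)
      (by filter_upwards [aemem01] with y hy using hM _ (hbd x hx y hy))
    rwa [intconst01] at this
  have := integral_mono_ae (comp_dbl_int hm hbd hφ hC) (integrable_const M)
    (by filter_upwards [aemem01] with x hx using inner_le x hx)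
  rwa [intconst01] at this

lemma dbl_comp_eq (hm : Measurable (Function.uncurry g))
    (hbd : ∀ x ∈ Icc (0:ℝ) 1, ∀ y ∈ Icc (0:ℝ) 1, g x y ∈ Icc (0:ℝ) 1)
    {φ : ℝ → ℝ} (hφ : Measurable φ) {C M : ℝ} (hC : ∀ u ∈ Icc (0:ℝ) 1, |φ u| ≤ C)
    (hM : ∀ u ∈ Icc (0:ℝ) 1, φ u ≤ M)
    (heq : (∫ x, (∫ y, φ (g x y) ∂μ01) ∂μ01) = M) :
    ∀ᵐ x ∂μ01, ∀ᵐ y ∂μ01, φ (g x y) = M := by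
  have outer_int := comp_dbl_int hm hbd hφ hC
  have inner_le : ∀ x ∈ Icc (0:ℝ) 1, (∫ y, φ (g x y) ∂μ01) ≤ M := by
    intro x hx
    have := integral_mono_ae (comp_slice_int hm hbd hφ hC hx) (integrable_const M)
      (by filter_upwards [aemem01] with y hy using hM _ (hbd x hx y hy))
    rwa [intconst01] at this
  have key : (∫ x, (M - ∫ y, φ (g x y) ∂μ01) ∂μ01) = 0 := by
    rw [integral_sub (integrable_const M) outer_int, intconst01, heq, sub_self]
  have h1 : (fun x => M - ∫ y, φ (g x y) ∂μ01) =ᵐ[μ01] 0 := by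
    refine (integral_eq_zero_iff_of_nonneg_ae ?_ ((integrable_const M).sub outer_int)).mp key
    filter_upwards [aemem01] with x hx
    simpa using sub_nonneg.2 (inner_le x hx)
  filter_upwards [h1, aemem01] with x hx hxI
  have hx' : (∫ y, (M - φ (g x y)) ∂μ01) = 0 := by
    rw [integral_sub (integrable_const M) (comp_slice_int hm hbd hφ hC hxI), intconst01]
    simpa using hx
  have h2 : (fun y => M - φ (g x y)) =ᵐ[μ01] 0 := by
    refine (integral_eq_zero_iff_of_nonneg_ae ?_
      ((integrable_const M).sub (comp_slice_int hm hbd hφ hC hxI))).mp hx'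
    filter_upwards [aemem01] with y hy
    simpa using sub_nonneg.2 (hM _ (hbd x hxI y hy))
  filter_upwards [h2] with y hy
  have : M - φ (g x y) = 0 := hy
  linarith

end GBounds

/-- Q3: the double integral of the cube. -/
noncomputable def Q3 (g : ℝ → ℝ → ℝ) : ℝ :=
  ∫ x in Icc (0:ℝ) 1, ∫ y in Icc (0:ℝ) 1, (g x y)^3


lemma cube_meas : Measurable fun u : ℝ => u^3 := measurable_id.pow_const 3

lemma cube_abs : ∀ u ∈ Icc (0:ℝ) 1, |u^3| ≤ 1 := fun u hu => by
  rw [abs_pow]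
  exact pow_le_one₀ (abs_nonneg _) (abs_le.2 ⟨by linarith [hu.1], hu.2⟩)

set_option maxHeartbeats 1000000 in
lemma psi_sum {g : ℝ → ℝ → ℝ} (hm : Measurable (Function.uncurry g))
    (hbd : ∀ x ∈ Icc (0:ℝ) 1, ∀ y ∈ Icc (0:ℝ) 1, g x y ∈ Icc (0:ℝ) 1) (b1 b2 : ℝ) :
    (∫ x, (∫ y, (b1 * g x y + b2 * (g x y)^3 - I0 (g x y)) ∂μ01) ∂μ01)
      = b1 * edgeDensity g + b2 * Q3 g - rateFn g := by
  have hI0m := I0_continuous.measurable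
  have inner_eq : ∀ x ∈ Icc (0:ℝ) 1,
      (∫ y, (b1 * g x y + b2 * (g x y)^3 - I0 (g x y)) ∂μ01)
        = b1 * (∫ y, g x y ∂μ01) + b2 * (∫ y, (g x y)^3 ∂μ01) - ∫ y, I0 (g x y) ∂μ01 := by
    intro x hx
    have i1 := slice_int hm hbd hx
    have i2 : Integrable (fun y => (g x y)^3) μ01 :=
      comp_slice_int hm hbd cube_meas cube_abs hx
    have i3 : Integrable (fun y => I0 (g x y)) μ01 :=
      comp_slice_int hm hbd hI0m (fun u hu => I0_abs_le hu) hx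
    have i1' : Integrable (fun y => b1 * g x y) μ01 := i1.const_mul b1
    have i2' : Integrable (fun y => b2 * (g x y)^3) μ01 := i2.const_mul b2
    have i12 : Integrable (fun y => b1 * g x y + b2 * (g x y)^3) μ01 := i1'.add i2'
    rw [integral_sub i12 i3, integral_add i1' i2', integral_const_mul, integral_const_mul]
  have d1 := d_int hm hbd
  have d2 : Integrable (fun x => ∫ y, (g x y)^3 ∂μ01) μ01 :=
    comp_dbl_int hm hbd cube_meas cube_abs
  have d3 : Integrable (fun x => ∫ y, I0 (g x y) ∂μ01) μ01 :=
    comp_dbl_int hm hbd hI0m (fun u hu => I0_abs_le hu)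
  calc (∫ x, (∫ y, (b1 * g x y + b2 * (g x y)^3 - I0 (g x y)) ∂μ01) ∂μ01)
      = ∫ x, (b1 * (∫ y, g x y ∂μ01) + b2 * (∫ y, (g x y)^3 ∂μ01)
          - ∫ y, I0 (g x y) ∂μ01) ∂μ01 :=
        integral_congr_ae (by filter_upwards [aemem01] with x hx using inner_eq x hx)
    _ = b1 * edgeDensity g + b2 * Q3 g - rateFn g := by
        have d1' : Integrable (fun x => b1 * ∫ y, g x y ∂μ01) μ01 := d1.const_mul b1
        have d2' : Integrable (fun x => b2 * ∫ y, (g x y)^3 ∂μ01) μ01 := d2.const_mul b2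
        have d12 : Integrable (fun x => b1 * (∫ y, g x y ∂μ01)
            + b2 * ∫ y, (g x y)^3 ∂μ01) μ01 := d1'.add d2'
        rw [integral_sub d12 d3, integral_add d1' d2', integral_const_mul, integral_const_mul]
        rfl


set_option maxHeartbeats 2000000 in
lemma triangle_structure {g : ℝ → ℝ → ℝ} (hm : Measurable (Function.uncurry g))
    (hsym : ∀ x ∈ Icc (0:ℝ) 1, ∀ y ∈ Icc (0:ℝ) 1, g x y = g y x)
    (hbd : ∀ x ∈ Icc (0:ℝ) 1, ∀ y ∈ Icc (0:ℝ) 1, g x y ∈ Icc (0:ℝ) 1) :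
    triangleDensity g ≤ Q3 g ∧
      (triangleDensity g = Q3 g →
        ∀ᵐ x ∂μ01, ∀ᵐ y ∂μ01, g x y = edgeDensity g) := by
  have habs := g_abs hbd
  -- pointwise bounds on the product
  have prod_abs : ∀ x ∈ Icc (0:ℝ) 1, ∀ y ∈ Icc (0:ℝ) 1, ∀ z ∈ Icc (0:ℝ) 1,
      |g x y * g y z * g z x| ≤ 1 := by
    intro x hx y hy z hz
    rw [abs_mul, abs_mul]
    exact mul_le_one₀ (mul_le_one₀ (habs x hx y hy) (abs_nonneg _) (habs y hy z hz))
      (abs_nonneg _) (habs z hz x hx)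
  have cube_abs' : ∀ x ∈ Icc (0:ℝ) 1, ∀ y ∈ Icc (0:ℝ) 1, |(g x y)^3| ≤ 1 :=
    fun x hx y hy => cube_abs _ (hbd x hx y hy)
  -- F3 bounds
  have F3_nonneg : ∀ x ∈ Icc (0:ℝ) 1, ∀ y ∈ Icc (0:ℝ) 1, ∀ z ∈ Icc (0:ℝ) 1,
      0 ≤ ((g x y)^3 + (g y z)^3 + (g z x)^3)/3 - g x y * g y z * g z x :=
    fun x hx y hy z hz => sub_nonneg.2
      (amgm (hbd x hx y hy).1 (hbd y hy z hz).1 (hbd z hz x hx).1)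
  have F3_abs : ∀ x ∈ Icc (0:ℝ) 1, ∀ y ∈ Icc (0:ℝ) 1, ∀ z ∈ Icc (0:ℝ) 1,
      |((g x y)^3 + (g y z)^3 + (g z x)^3)/3 - g x y * g y z * g z x| ≤ 2 := by
    intro x hx y hy z hz
    have h1 := abs_le.1 (cube_abs' x hx y hy)
    have h2 := abs_le.1 (cube_abs' y hy z hz)
    have h3 := abs_le.1 (cube_abs' z hz x hx)
    have h4 := abs_le.1 (prod_abs x hx y hy z hz)
    rw [abs_le]; constructor <;> [linarith; linarith]
  -- measurability of F3 as a function on (ℝ×ℝ)×ℝ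
  have m12 : Measurable fun p : (ℝ×ℝ)×ℝ => g p.1.1 p.1.2 :=
    hm.comp ((measurable_fst.fst).prodMk (measurable_fst.snd))
  have m23 : Measurable fun p : (ℝ×ℝ)×ℝ => g p.1.2 p.2 :=
    hm.comp ((measurable_fst.snd).prodMk measurable_snd)
  have m31 : Measurable fun p : (ℝ×ℝ)×ℝ => g p.2 p.1.1 :=
    hm.comp (measurable_snd.prodMk (measurable_fst.fst))
  have mP : Measurable fun p : (ℝ×ℝ)×ℝ => g p.1.1 p.1.2 * g p.1.2 p.2 * g p.2 p.1.1 :=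
    (m12.mul m23).mul m31
  have mF : Measurable fun p : (ℝ×ℝ)×ℝ =>
      ((g p.1.1 p.1.2)^3 + (g p.1.2 p.2)^3 + (g p.2 p.1.1)^3)/3
        - g p.1.1 p.1.2 * g p.1.2 p.2 * g p.2 p.1.1 :=
    ((((m12.pow_const 3).add (m23.pow_const 3)).add (m31.pow_const 3)).div_const 3).sub mP
  -- slice integrabilities in z
  have zslice_cube_mid : ∀ y ∈ Icc (0:ℝ) 1, Integrable (fun z => (g y z)^3) μ01 :=
    fun y hy => comp_slice_int hm hbd cube_meas cube_abs hy
  have zslice_cube_left : ∀ x ∈ Icc (0:ℝ) 1, Integrable (fun z => (g z x)^3) μ01 :=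
    fun x hx => intg_of_bdd (((slice_meas' hm x).pow_const 3).aestronglyMeasurable)
      (fun z hz => cube_abs' z hz x hx)
  have zslice_prod : ∀ x ∈ Icc (0:ℝ) 1, ∀ y ∈ Icc (0:ℝ) 1,
      Integrable (fun z => g x y * g y z * g z x) μ01 := by
    intro x hx y hy
    refine intg_of_bdd ?_ (fun z hz => prod_abs x hx y hy z hz)
    exact ((measurable_const.mul (slice_meas hm y)).mul (slice_meas' hm x)).aestronglyMeasurable
  have zslice_F3 : ∀ x ∈ Icc (0:ℝ) 1, ∀ y ∈ Icc (0:ℝ) 1,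
      Integrable (fun z => ((g x y)^3 + (g y z)^3 + (g z x)^3)/3
        - g x y * g y z * g z x) μ01 := by
    intro x hx y hy
    refine intg_of_bdd ?_ (fun z hz => F3_abs x hx y hy z hz)
    have mz : Measurable fun z : ℝ => ((g x y)^3 + (g y z)^3 + (g z x)^3)/3
        - g x y * g y z * g z x :=
      (((measurable_const.add ((slice_meas hm y).pow_const 3)).add
        ((slice_meas' hm x).pow_const 3)).div_const 3).sub
        ((measurable_const.mul (slice_meas hm y)).mul (slice_meas' hm x))
    exact mz.aestronglyMeasurable
  -- q3 and symmetry
  have q3_symm : ∀ x ∈ Icc (0:ℝ) 1,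
      (∫ z, (g z x)^3 ∂μ01) = ∫ z, (g x z)^3 ∂μ01 := by
    intro x hx
    refine integral_congr_ae ?_
    filter_upwards [aemem01] with z hz
    rw [hsym z hz x hx]
  -- J decomposition
  have J_decomp : ∀ x ∈ Icc (0:ℝ) 1, ∀ y ∈ Icc (0:ℝ) 1,
      (∫ z, (((g x y)^3 + (g y z)^3 + (g z x)^3)/3 - g x y * g y z * g z x) ∂μ01)
        = ((g x y)^3 + (∫ z, (g y z)^3 ∂μ01) + (∫ z, (g x z)^3 ∂μ01))/3
          - ∫ z, g x y * g y z * g z x ∂μ01 := by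
    intro x hx y hy
    have ic : Integrable (fun _z : ℝ => (g x y)^3) μ01 := integrable_const _
    have i1 : Integrable (fun z => (g x y)^3 + (g y z)^3) μ01 := ic.add (zslice_cube_mid y hy)
    have i2 : Integrable (fun z => (g x y)^3 + (g y z)^3 + (g z x)^3) μ01 :=
      i1.add (zslice_cube_left x hx)
    have i3 : Integrable (fun z => ((g x y)^3 + (g y z)^3 + (g z x)^3)/3) μ01 :=
      i2.div_const 3
    rw [integral_sub i3 (zslice_prod x hx y hy), integral_div, integral_add i1
      (zslice_cube_left x hx), integral_add ic (zslice_cube_mid y hy), intconst01,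
      q3_symm x hx]
  -- strong measurability of the inner z-integrals as functions of (x,y)
  have mJ2 : StronglyMeasurable fun p : ℝ×ℝ =>
      ∫ z, (((g p.1 p.2)^3 + (g p.2 z)^3 + (g z p.1)^3)/3
        - g p.1 p.2 * g p.2 z * g z p.1) ∂μ01 :=
    mF.stronglyMeasurable.integral_prod_right'
  have mT2 : StronglyMeasurable fun p : ℝ×ℝ =>
      ∫ z, g p.1 p.2 * g p.2 z * g z p.1 ∂μ01 :=
    mP.stronglyMeasurable.integral_prod_right'
  have J_int_slice : ∀ x ∈ Icc (0:ℝ) 1, Integrable (fun y => (∫ z, (((g x y)^3 + (g y z)^3 + (g z x)^3)/3 - g x y * g y z * g z x) ∂μ01)) μ01 := by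
    intro x hx
    refine intg_of_bdd ?_
      (fun y hy => abs_int_le (fun z hz => F3_abs x hx y hy z hz))
    exact (mJ2.comp_measurable
      (measurable_const.prodMk measurable_id : Measurable fun y : ℝ => (x, y))).aestronglyMeasurable
  have T3_int_slice : ∀ x ∈ Icc (0:ℝ) 1, Integrable (fun y => (∫ z, g x y * g y z * g z x ∂μ01)) μ01 := by
    intro x hx
    refine intg_of_bdd ?_
      (fun y hy => abs_int_le (fun z hz => prod_abs x hx y hy z hz))
    exact (mT2.comp_measurable
      (measurable_const.prodMk measurable_id : Measurable fun y : ℝ => (x, y))).aestronglyMeasurable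
  have q3_int : Integrable (fun x => ∫ y, (g x y)^3 ∂μ01) μ01 :=
    comp_dbl_int hm hbd cube_meas cube_abs
  have Jmid_eq : ∀ x ∈ Icc (0:ℝ) 1,
      (∫ y, (∫ z, (((g x y)^3 + (g y z)^3 + (g z x)^3)/3 - g x y * g y z * g z x) ∂μ01) ∂μ01)
        = ((∫ y, (g x y)^3 ∂μ01) + Q3 g + (∫ y, (g x y)^3 ∂μ01))/3
          - ∫ y, (∫ z, g x y * g y z * g z x ∂μ01) ∂μ01 := by
    intro x hx
    have hcongr : (∫ y, (∫ z, (((g x y)^3 + (g y z)^3 + (g z x)^3)/3 - g x y * g y z * g z x) ∂μ01) ∂μ01)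
        = ∫ y, (((g x y)^3 + (∫ z, (g y z)^3 ∂μ01) + (∫ z, (g x z)^3 ∂μ01))/3
            - ∫ z, g x y * g y z * g z x ∂μ01) ∂μ01 :=
      integral_congr_ae (by filter_upwards [aemem01] with y hy using J_decomp x hx y hy)
    rw [hcongr]
    have icub : Integrable (fun y => (g x y)^3) μ01 :=
      comp_slice_int hm hbd cube_meas cube_abs hx
    have iconst : Integrable (fun _y : ℝ => ∫ z, (g x z)^3 ∂μ01) μ01 := integrable_const _
    have i1 : Integrable (fun y => (g x y)^3 + ∫ z, (g y z)^3 ∂μ01) μ01 := icub.add q3_int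
    have i2 : Integrable (fun y => (g x y)^3 + (∫ z, (g y z)^3 ∂μ01)
        + ∫ z, (g x z)^3 ∂μ01) μ01 := i1.add iconst
    rw [integral_sub (i2.div_const 3) (T3_int_slice x hx), integral_div,
      integral_add i1 iconst, integral_add icub q3_int, intconst01]
    rfl
  have J_int2 : Integrable (fun x => ∫ y, (∫ z, (((g x y)^3 + (g y z)^3 + (g z x)^3)/3 - g x y * g y z * g z x) ∂μ01) ∂μ01) μ01 := by
    refine intg_of_bdd ?_ (fun x hx => abs_int_le
      (fun y hy => abs_int_le (fun z hz => F3_abs x hx y hy z hz)))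
    exact (mJ2.integral_prod_right').aestronglyMeasurable
  have T3_int2 : Integrable (fun x => ∫ y, (∫ z, g x y * g y z * g z x ∂μ01) ∂μ01) μ01 := by
    refine intg_of_bdd ?_ (fun x hx => abs_int_le
      (fun y hy => abs_int_le (fun z hz => prod_abs x hx y hy z hz)))
    exact (mT2.integral_prod_right').aestronglyMeasurable
  have D_eq : (∫ x, (∫ y, (∫ z, (((g x y)^3 + (g y z)^3 + (g z x)^3)/3 - g x y * g y z * g z x) ∂μ01) ∂μ01) ∂μ01) = Q3 g - triangleDensity g := by
    have hcongr : (∫ x, (∫ y, (∫ z, (((g x y)^3 + (g y z)^3 + (g z x)^3)/3 - g x y * g y z * g z x) ∂μ01) ∂μ01) ∂μ01)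
        = ∫ x, (((∫ y, (g x y)^3 ∂μ01) + Q3 g + (∫ y, (g x y)^3 ∂μ01))/3
            - ∫ y, (∫ z, g x y * g y z * g z x ∂μ01) ∂μ01) ∂μ01 :=
      integral_congr_ae (by filter_upwards [aemem01] with x hx using Jmid_eq x hx)
    rw [hcongr]
    have iQc : Integrable (fun _x : ℝ => Q3 g) μ01 := integrable_const _
    have i1 : Integrable (fun x => (∫ y, (g x y)^3 ∂μ01) + Q3 g) μ01 := q3_int.add iQc
    have i2 : Integrable (fun x => (∫ y, (g x y)^3 ∂μ01) + Q3 g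
        + ∫ y, (g x y)^3 ∂μ01) μ01 := i1.add q3_int
    rw [integral_sub (i2.div_const 3) T3_int2, integral_div,
      integral_add i1 q3_int, integral_add q3_int iQc, intconst01]
    have hQ : (∫ x, (∫ y, (g x y)^3 ∂μ01) ∂μ01) = Q3 g := rfl
    have hT : (∫ x, (∫ y, (∫ z, g x y * g y z * g z x ∂μ01) ∂μ01) ∂μ01) = triangleDensity g := rfl
    rw [hQ, hT]
    ring
  have J_nonneg_slice : ∀ x ∈ Icc (0:ℝ) 1, ∀ y ∈ Icc (0:ℝ) 1, 0 ≤ (∫ z, (((g x y)^3 + (g y z)^3 + (g z x)^3)/3 - g x y * g y z * g z x) ∂μ01) :=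
    fun x hx y hy => integral_nonneg_of_ae
      (by filter_upwards [aemem01] with z hz using F3_nonneg x hx y hy z hz)
  have Jmid_nonneg : ∀ x ∈ Icc (0:ℝ) 1, 0 ≤ ∫ y, (∫ z, (((g x y)^3 + (g y z)^3 + (g z x)^3)/3 - g x y * g y z * g z x) ∂μ01) ∂μ01 :=
    fun x hx => integral_nonneg_of_ae
      (by filter_upwards [aemem01] with y hy using J_nonneg_slice x hx y hy)
  have D_nonneg : 0 ≤ ∫ x, (∫ y, (∫ z, (((g x y)^3 + (g y z)^3 + (g z x)^3)/3 - g x y * g y z * g z x) ∂μ01) ∂μ01) ∂μ01 :=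
    integral_nonneg_of_ae
      (by filter_upwards [aemem01] with x hx using Jmid_nonneg x hx)
  constructor
  · linarith [D_nonneg, D_eq]
  · intro heq
    have hD0 : (∫ x, (∫ y, (∫ z, (((g x y)^3 + (g y z)^3 + (g z x)^3)/3 - g x y * g y z * g z x) ∂μ01) ∂μ01) ∂μ01) = 0 := by rw [D_eq, heq, sub_self]
    have h1 : (fun x => ∫ y, (∫ z, (((g x y)^3 + (g y z)^3 + (g z x)^3)/3 - g x y * g y z * g z x) ∂μ01) ∂μ01) =ᵐ[μ01] 0 :=
      (integral_eq_zero_iff_of_nonneg_ae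
        (by filter_upwards [aemem01] with x hx using Jmid_nonneg x hx) J_int2).mp hD0
    have E : ∀ᵐ x ∂μ01, ∀ᵐ y ∂μ01, ∀ᵐ z ∂μ01, g x y = g y z := by
      filter_upwards [h1, aemem01] with x hx1 hxI
      have hx0 : (∫ y, (∫ z, (((g x y)^3 + (g y z)^3 + (g z x)^3)/3 - g x y * g y z * g z x) ∂μ01) ∂μ01) = 0 := by simpa using hx1
      have h2 : (fun y => (∫ z, (((g x y)^3 + (g y z)^3 + (g z x)^3)/3 - g x y * g y z * g z x) ∂μ01)) =ᵐ[μ01] 0 :=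
        (integral_eq_zero_iff_of_nonneg_ae
          (by filter_upwards [aemem01] with y hy using J_nonneg_slice x hxI y hy)
          (J_int_slice x hxI)).mp hx0
      filter_upwards [h2, aemem01] with y hy1 hyI
      have hy0 : (∫ z, (((g x y)^3 + (g y z)^3 + (g z x)^3)/3 - g x y * g y z * g z x) ∂μ01) = 0 := by simpa using hy1
      have h3 : (fun z => (((g x y)^3 + (g y z)^3 + (g z x)^3)/3 - g x y * g y z * g z x)) =ᵐ[μ01] 0 :=
        (integral_eq_zero_iff_of_nonneg_ae
          (by filter_upwards [aemem01] with z hz using F3_nonneg x hxI y hyI z hz)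
          (zslice_F3 x hxI y hyI)).mp hy0
      filter_upwards [h3, aemem01] with z hz1 hzI
      exact amgm_eq (hbd x hxI y hyI).1 (hbd y hyI z hzI).1 (hbd z hzI x hxI).1
        (by simpa using hz1)
    have hgd : ∀ᵐ x ∂μ01, ∀ᵐ y ∂μ01, g x y = ∫ z, g y z ∂μ01 := by
      filter_upwards [E] with x hx
      filter_upwards [hx] with y hy
      have hconst : (∫ z, g y z ∂μ01) = ∫ _z, g x y ∂μ01 :=
        integral_congr_ae (by filter_upwards [hy] with z hz using hz.symm)
      rw [hconst, intconst01]
    have hdp : ∀ᵐ x ∂μ01, (∫ z, g x z ∂μ01) = edgeDensity g := by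
      filter_upwards [hgd] with x hx
      have h' : (∫ z, g x z ∂μ01) = ∫ y, (∫ z, g y z ∂μ01) ∂μ01 :=
        integral_congr_ae (by filter_upwards [hx] with y hy using hy)
      rw [h']; rfl
    filter_upwards [hgd] with x hx
    filter_upwards [hx, hdp] with y h1' h2'
    rw [h1']; exact h2'


/-- Any graphon maximizing the free energy `Ψ(g) = -I(g) + β₁ e(g) + β₂ t(g)`
satisfies `t(g) ≤ e(g)³`. -/
theorem maximizer_triangle_le (β₁ β₂ : ℝ) (gstar : ℝ → ℝ → ℝ)
    (hg : IsGraphon gstar)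
    (hmax : ∀ g' : ℝ → ℝ → ℝ, IsGraphon g' →
      -rateFn g' + β₁ * edgeDensity g' + β₂ * triangleDensity g' ≤
        -rateFn gstar + β₁ * edgeDensity gstar + β₂ * triangleDensity gstar) :
    triangleDensity gstar ≤ (edgeDensity gstar) ^ 3 := by
  obtain ⟨hm, hsym, hbd⟩ := hg
  have hmax_const : ∀ c ∈ Icc (0:ℝ) 1,
      -(I0 c) + β₁ * c + β₂ * c^3 ≤
        -rateFn gstar + β₁ * edgeDensity gstar + β₂ * triangleDensity gstar := by
    intro c hc
    have h := hmax (fun _ _ => c) (isGraphon_const hc)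
    rwa [edge_const, tri_const, rate_const] at h
  rcases lt_or_ge β₂ 0 with hβ | hβ
  · -- β₂ < 0 : compare with the constant graphon `p` and use Jensen
    have hp := edge_mem hm hbd
    have hj := jensen_I0 hm hbd
    have hc := hmax_const (edgeDensity gstar) hp
    by_contra hlt
    push_neg at hlt
    have hmul := mul_lt_mul_of_neg_left hlt hβ
    linarith
  · -- β₂ ≥ 0
    obtain ⟨htQ, hstruct⟩ := triangle_structure hm hsym hbd
    have hψm : Measurable fun u : ℝ => β₁ * u + β₂ * u^3 - I0 u :=
      ((measurable_const.mul measurable_id).add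
        (measurable_const.mul (measurable_id.pow_const 3))).sub I0_continuous.measurable
    have hψc : ContinuousOn (fun u : ℝ => β₁ * u + β₂ * u^3 - I0 u) (Icc (0:ℝ) 1) :=
      (((continuous_const.mul continuous_id).add
        (continuous_const.mul (continuous_pow 3))).sub I0_continuous).continuousOn
    obtain ⟨u₀, hu₀I, hu₀max⟩ :=
      isCompact_Icc.exists_isMaxOn (nonempty_Icc.2 zero_le_one) hψc
    have hMle : ∀ u ∈ Icc (0:ℝ) 1,
        β₁ * u + β₂ * u^3 - I0 u ≤ β₁ * u₀ + β₂ * u₀^3 - I0 u₀ :=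
      fun u hu => isMaxOn_iff.mp hu₀max u hu
    have hψb : ∀ u ∈ Icc (0:ℝ) 1, |β₁ * u + β₂ * u^3 - I0 u| ≤ |β₁| + |β₂| + 1 := by
      intro u hu
      have h1 : |u| ≤ 1 := abs_le.2 ⟨by linarith [hu.1], hu.2⟩
      have e1 : |β₁ * u| ≤ |β₁| := by
        rw [abs_mul]; exact mul_le_of_le_one_right (abs_nonneg _) h1
      have e2 : |β₂ * u^3| ≤ |β₂| := by
        rw [abs_mul]; exact mul_le_of_le_one_right (abs_nonneg _) (cube_abs u hu)
      have e3 := I0_abs_le hu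
      rw [abs_le]; constructor
      · linarith [abs_le.1 e1, abs_le.1 e2, abs_le.1 e3]
      · linarith [abs_le.1 e1, abs_le.1 e2, abs_le.1 e3]
    have hS := psi_sum hm hbd β₁ β₂
    have hSle : (∫ x, (∫ y, (β₁ * gstar x y + β₂ * (gstar x y)^3 - I0 (gstar x y)) ∂μ01) ∂μ01)
        ≤ β₁ * u₀ + β₂ * u₀^3 - I0 u₀ :=
      dbl_comp_le hm hbd hψm hψb hMle
    have hmaxc := hmax_const u₀ hu₀I
    have E2 : β₂ * triangleDensity gstar ≤ β₂ * Q3 gstar :=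
      mul_le_mul_of_nonneg_left htQ hβ
    have h5 : β₁ * u₀ + β₂ * u₀^3 - I0 u₀
        ≤ (∫ x, (∫ y, (β₁ * gstar x y + β₂ * (gstar x y)^3 - I0 (gstar x y)) ∂μ01) ∂μ01) := by
      rw [hS]; linarith
    have heqS : (∫ x, (∫ y, (β₁ * gstar x y + β₂ * (gstar x y)^3 - I0 (gstar x y)) ∂μ01) ∂μ01)
        = β₁ * u₀ + β₂ * u₀^3 - I0 u₀ := le_antisymm hSle h5
    have heqtQ : β₂ * triangleDensity gstar = β₂ * Q3 gstar := by
      rw [heqS] at hS; linarith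
    rcases hβ.lt_or_eq with hpos | hz0
    · -- β₂ > 0 : equality in AM–GM forces gstar to be a.e. constant
      have htQe : triangleDensity gstar = Q3 gstar :=
        mul_left_cancel₀ (ne_of_gt hpos) heqtQ
      have hconst := hstruct htQe
      rw [tri_aeconst hsym hconst]
    · -- β₂ = 0 : strict concavity forces gstar to be a.e. constant
      have hz : β₂ = 0 := hz0.symm
      subst hz
      have hae := dbl_comp_eq hm hbd hψm hψb hMle heqS
      have hconc : StrictConcaveOn ℝ (Icc (0:ℝ) 1)
          (fun u : ℝ => β₁ * u + (0:ℝ) * u^3 - I0 u) := by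
        refine ⟨convex_Icc 0 1, fun x hx y hy hxy a b ha hb hab => ?_⟩
        have key := I0_strictConvexOn.2 hx hy hxy ha hb hab
        simp only [smul_eq_mul] at key ⊢
        nlinarith [key]
      have huniq : ∀ v ∈ Icc (0:ℝ) 1,
          β₁ * v + (0:ℝ) * v^3 - I0 v = β₁ * u₀ + (0:ℝ) * u₀^3 - I0 u₀ → v = u₀ := by
        intro v hv hveq
        by_contra hne
        have hmid := hconc.2 hv hu₀I hne (by norm_num : (0:ℝ) < 1/2)
          (by norm_num : (0:ℝ) < 1/2) (by norm_num)
        have hmem : (1/2 : ℝ) • v + (1/2 : ℝ) • u₀ ∈ Icc (0:ℝ) 1 :=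
          (convex_Icc (0:ℝ) 1) hv hu₀I (by norm_num) (by norm_num) (by norm_num)
        have hle2 := hMle _ hmem
        simp only [smul_eq_mul] at hmid hle2
        linarith
      have hconst : ∀ᵐ x ∂μ01, ∀ᵐ y ∂μ01, gstar x y = u₀ := by
        filter_upwards [hae, aemem01] with x hx hxI
        filter_upwards [hx, aemem01] with y hy hyI
        exact huniq _ (hbd x hxI y hyI) (by simpa using hy)
      rw [tri_aeconst hsym hconst, edge_aeconst hconst]
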